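/- For every x₀ ∈ E, every control ξ ∈ 𝒰, and all t₀ ≤ t, the point y = Ψ t t₀ x₀ + ρ • ∫ s in Set.Icc t₀ t, Ψ t s (ξ s) satisfies Metric.infDist y (A t) ≤ K * (‖x₀‖ + ρ * K / γ) * Real.exp (-γ * (t - t₀)); i.e., every solution of x' = L(t)x + ρξ(t) approaches the attractor fibres exponentially fast, both forward in time and in the pullback sense. -/

import Mathlib

open MeasureTheory Set Metric Pointwise
open scoped RealInnerProductSpace

noncomputable section

abbrev Euc (d : ℕ) : Type := EuclideanSpace ℝ (Fin d)

/-- The set of admissible controls: measurable functions with values in the closed unit ball. -/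
def ctrlSet (d : ℕ) : Set (ℝ → Euc d) :=
  {ξ | Measurable ξ ∧ ∀ s, ‖ξ s‖ ≤ 1}

/-- The attractor fibre at time `t`. -/
def Afib (d : ℕ) (Ψ : ℝ → ℝ → (Euc d →L[ℝ] Euc d)) (ρ t : ℝ) : Set (Euc d) :=
  {x | ∃ ξ ∈ ctrlSet d, x = ρ • ∫ s in Set.Iic t, Ψ t s (ξ s)}

/-- The reachable-set operator of the linear differential inclusion. -/
def reach (d : ℕ) (Ψ : ℝ → ℝ → (Euc d →L[ℝ] Euc d)) (ρ t t₀ : ℝ) (S : Set (Euc d)) :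
    Set (Euc d) :=
  {y | ∃ x₀ ∈ S, ∃ ξ ∈ ctrlSet d, y = Ψ t t₀ x₀ + ρ • ∫ s in Set.Icc t₀ t, Ψ t s (ξ s)}

lemma expInt (γ c : ℝ) (hγ : 0 < γ) :
    IntegrableOn (fun s => Real.exp (-γ * (c - s))) (Iic c) := by
  have m : MeasurableEmbedding (fun x : ℝ => -x) :=
    (Homeomorph.neg ℝ).measurableEmbedding
  have h0 : IntegrableOn (fun x : ℝ => Real.exp (-γ * (c + x))) (Ici (-c)) := by
    have h1 : IntegrableOn (fun x : ℝ => Real.exp (-γ * c) * Real.exp (-γ * x))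
        (Ioi (-c)) := (exp_neg_integrableOn_Ioi (-c) hγ).const_mul _
    rw [integrableOn_Ici_iff_integrableOn_Ioi]
    refine h1.congr_fun (fun x _ => ?_) measurableSet_Ioi
    beta_reduce; rw [← Real.exp_add]; ring_nf
  unfold IntegrableOn
  rw [show (volume : Measure ℝ).restrict (Iic c)
      = (Measure.map (fun x : ℝ => -x) volume).restrict (Iic c) by
    rw [Measure.map_neg_eq_self]]
  rw [Measure.restrict_map m.measurable measurableSet_Iic, m.integrable_map_iff]
  have : (fun x : ℝ => -x) ⁻¹' Iic c = Ici (-c) := by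
    ext x; simp [neg_le]
  rw [this]
  refine h0.congr_fun (fun x _ => ?_) measurableSet_Ici
  simp [Function.comp, sub_eq_add_neg]

lemma expVal (γ c : ℝ) (hγ : 0 < γ) :
    ∫ s in Iic c, Real.exp (-γ * (c - s)) = 1 / γ := by
  have h1 : (∫ s in Iic c, Real.exp (-γ * (c - s)))
      = ∫ x in Ioi (-c), Real.exp (-γ * (c + x)) := by
    rw [← integral_comp_neg_Iic c (fun x => Real.exp (-γ * (c + x)))]
    simp [sub_eq_add_neg]
  rw [h1]
  have h2 : (∫ x in Ioi (-c), Real.exp (-γ * (c + x)))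
      = Real.exp (-γ * c) * ∫ x in Ioi (-c), Real.exp (-(γ * x)) := by
    rw [← integral_const_mul]
    congr 1; ext x; rw [← Real.exp_add]; ring_nf
  rw [h2]
  have h3 : (∫ x in Ioi (-c), Real.exp (-(γ * x)))
      = γ⁻¹ • ∫ x in Ioi (γ * (-c)), Real.exp (-x) :=
    integral_comp_mul_left_Ioi (fun x => Real.exp (-x)) (-c) hγ
  rw [h3, integral_exp_neg_Ioi, smul_eq_mul,
    show -(γ * -c) = γ * c by ring, show -γ * c = -(γ * c) by ring, Real.exp_neg]
  field_simp

/-- Exponential attraction of every solution to the attractor fibres. -/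
theorem attractor_exponential_attraction
    (d : ℕ) (hd : 1 ≤ d)
    (L : ℝ → (Euc d →L[ℝ] Euc d)) (hL : Continuous L)
    (Ψ : ℝ → ℝ → (Euc d →L[ℝ] Euc d))
    (hΨc : Continuous fun p : ℝ × ℝ => Ψ p.1 p.2)
    (hΨid : ∀ t : ℝ, Ψ t t = ContinuousLinearMap.id ℝ (Euc d))
    (hΨcoc : ∀ t s r : ℝ, (Ψ t s).comp (Ψ s r) = Ψ t r)
    (hΨd : ∀ (s : ℝ) (x : Euc d) (t : ℝ), HasDerivAt (fun τ => Ψ τ s x) (L t (Ψ t s x)) t)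
    (K γ : ℝ) (hK : 1 ≤ K) (hγ : 0 < γ)
    (hstab : ∀ s t : ℝ, s ≤ t → ‖Ψ t s‖ ≤ K * Real.exp (-γ * (t - s)))
    (ρ : ℝ) (hρ : 0 < ρ) :
    ∀ (x₀ : Euc d), ∀ ξ ∈ ctrlSet d, ∀ t₀ t : ℝ, t₀ ≤ t →
      Metric.infDist (Ψ t t₀ x₀ + ρ • ∫ s in Set.Icc t₀ t, Ψ t s (ξ s)) (Afib d Ψ ρ t)
        ≤ K * (‖x₀‖ + ρ * K / γ) * Real.exp (-γ * (t - t₀)) := by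
  intro x₀ ξ hξ t₀ t ht
  have hK0 : (0:ℝ) ≤ K := le_trans zero_le_one hK
  -- measurability of the integrands
  have hmeas : ∀ t' : ℝ, Measurable fun s => Ψ t' s (ξ s) := by
    intro t'
    have h1 : Measurable fun s : ℝ => (Ψ t' s, ξ s) :=
      ((hΨc.comp (Continuous.prodMk_right t')).measurable).prodMk hξ.1
    exact (isBoundedBilinearMap_apply.continuous.measurable).comp h1
  -- norm bound of the integrand
  have hbd : ∀ t' s : ℝ, s ≤ t' → ‖Ψ t' s (ξ s)‖ ≤ K * Real.exp (-γ * (t' - s)) := by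
    intro t' s hs
    calc ‖Ψ t' s (ξ s)‖ ≤ ‖Ψ t' s‖ * ‖ξ s‖ := (Ψ t' s).le_opNorm _
      _ ≤ ‖Ψ t' s‖ * 1 := by
          have := (Ψ t' s).opNorm_nonneg
          exact mul_le_mul_of_nonneg_left (hξ.2 s) this
      _ = ‖Ψ t' s‖ := mul_one _
      _ ≤ K * Real.exp (-γ * (t' - s)) := hstab s t' hs
  -- integrability on Iic t'
  have hInt : ∀ t' : ℝ, IntegrableOn (fun s => Ψ t' s (ξ s)) (Iic t') := by
    intro t'
    refine Integrable.mono' ((expInt γ t' hγ).const_mul K)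
      (hmeas t').aestronglyMeasurable ?_
    filter_upwards [ae_restrict_mem measurableSet_Iic] with s hs
    exact hbd t' s hs
  -- the candidate attractor point
  have hmem : (ρ • ∫ s in Set.Iic t, Ψ t s (ξ s)) ∈ Afib d Ψ ρ t := ⟨ξ, hξ, rfl⟩
  refine le_trans (Metric.infDist_le_dist_of_mem hmem) ?_
  rw [dist_eq_norm]
  -- split the Iic t integral
  have hsplit : (∫ s in Set.Iic t, Ψ t s (ξ s))
      = (∫ s in Set.Iic t₀, Ψ t s (ξ s)) + ∫ s in Set.Ioc t₀ t, Ψ t s (ξ s) := by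
    rw [← setIntegral_union (Iic_disjoint_Ioc le_rfl) measurableSet_Ioc
      ((hInt t).mono_set (Iic_subset_Iic.mpr ht))
      ((hInt t).mono_set Ioc_subset_Iic_self),
      Iic_union_Ioc_eq_Iic ht]
  have hIcc : (∫ s in Set.Icc t₀ t, Ψ t s (ξ s)) = ∫ s in Set.Ioc t₀ t, Ψ t s (ξ s) :=
    integral_Icc_eq_integral_Ioc
  -- rewrite the tail integral through the evolution operator
  have hcomm : (∫ s in Set.Iic t₀, Ψ t s (ξ s))
      = Ψ t t₀ (∫ s in Set.Iic t₀, Ψ t₀ s (ξ s)) := by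
    rw [← ContinuousLinearMap.integral_comp_comm (Ψ t t₀) (hInt t₀)]
    refine setIntegral_congr_fun measurableSet_Iic (fun s _ => ?_)
    have := hΨcoc t t₀ s
    calc Ψ t s (ξ s) = ((Ψ t t₀).comp (Ψ t₀ s)) (ξ s) := by rw [this]
      _ = Ψ t t₀ (Ψ t₀ s (ξ s)) := rfl
  set v : Euc d := ∫ s in Set.Iic t₀, Ψ t₀ s (ξ s) with hv
  have hdiff : (Ψ t t₀ x₀ + ρ • ∫ s in Set.Icc t₀ t, Ψ t s (ξ s))
      - ρ • ∫ s in Set.Iic t, Ψ t s (ξ s) = Ψ t t₀ (x₀ - ρ • v) := by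
    rw [hsplit, hIcc, hcomm, map_sub, (Ψ t t₀).map_smul, smul_add]
    abel
  rw [hdiff]
  -- norm of v
  have hvnorm : ‖v‖ ≤ K / γ := by
    have h1 : ‖v‖ ≤ ∫ s in Set.Iic t₀, K * Real.exp (-γ * (t₀ - s)) := by
      refine norm_integral_le_of_norm_le ((expInt γ t₀ hγ).const_mul K) ?_
      filter_upwards [ae_restrict_mem measurableSet_Iic] with s hs
      exact hbd t₀ s hs
    have h2 : (∫ s in Set.Iic t₀, K * Real.exp (-γ * (t₀ - s))) = K / γ := by
      rw [integral_const_mul, expVal γ t₀ hγ]; ring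
    linarith
  -- final estimate
  calc ‖Ψ t t₀ (x₀ - ρ • v)‖ ≤ ‖Ψ t t₀‖ * ‖x₀ - ρ • v‖ := (Ψ t t₀).le_opNorm _
    _ ≤ (K * Real.exp (-γ * (t - t₀))) * (‖x₀‖ + ρ * (K / γ)) := by
        refine mul_le_mul (hstab t₀ t ht) ?_ (norm_nonneg _) ?_
        · calc ‖x₀ - ρ • v‖ ≤ ‖x₀‖ + ‖ρ • v‖ := norm_sub_le _ _
            _ = ‖x₀‖ + |ρ| * ‖v‖ := by rw [norm_smul, Real.norm_eq_abs]
            _ = ‖x₀‖ + ρ * ‖v‖ := by rw [abs_of_pos hρ]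
            _ ≤ ‖x₀‖ + ρ * (K / γ) := by
                have := mul_le_mul_of_nonneg_left hvnorm hρ.le
                linarith
        · positivity
    _ = K * (‖x₀‖ + ρ * K / γ) * Real.exp (-γ * (t - t₀)) := by ring
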